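/- Let (P_t^{(n)})_{n≥1} be a compatible family of Feller semigroups on a compact metric space M satisfying P_t^{(2)}(f⊗f)(x,x) = P_t^{(1)}(f²)(x) for all f ∈ C(M). Let (X_t,Y_t) denote the two-point motion with law P^{(2)}_{(x,y)}. Then for every T > 0 there exists a function ε_T : ℝ₊ → ℝ₊ with ε_T(r) → 0 as r → 0 such that sup_{t ∈ [0,T]} E^{(2)}_{(x,y)}[ d(X_t,Y_t)² ] ≤ ε_T(d(x,y)) for all x,y ∈ M. -/

import Mathlib

open MeasureTheory ProbabilityTheory Filter Topology
open scoped NNReal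

/-- Lemma 1.4: for the two-point motion of a compatible Feller family satisfying
`P_t^{(2)}(f⊗f)(x,x) = P_t(f²)(x)` (encoded by the diagonal-preservation property of the
two-point transition kernel `κ`, together with joint Feller continuity), for every `T > 0`
there is a modulus `ε_T` with `ε_T(r) → 0` as `r → 0` such that
`sup_{t ∈ [0,T]} E_{(x,y)}[d(X_t,Y_t)²] ≤ ε_T(d(x,y))` for all `x, y`. -/
theorem stmt3 {M : Type*} [MetricSpace M] [CompactSpace M]
    [MeasurableSpace M] [BorelSpace M]
    (κ : ℝ≥0 → Kernel (M × M) (M × M))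
    [hm : ∀ t, IsMarkovKernel (κ t)]
    (hsemi : ∀ s t : ℝ≥0, ∀ p : M × M, ((κ s) p).bind (κ t) = (κ (s + t)) p)
    (hcont : ∀ h : M × M → ℝ, Continuous h →
      Continuous fun q : ℝ≥0 × (M × M) => ∫ p, h p ∂ (κ q.1) q.2)
    (hdiag : ∀ (t : ℝ≥0) (x : M), ∀ᵐ p ∂ (κ t) (x, x), p.1 = p.2) :
    ∀ T : ℝ≥0, 0 < T → ∃ ε : ℝ → ℝ,
      Tendsto ε (nhdsWithin 0 (Set.Ici 0)) (nhds 0) ∧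
      ∀ t : ℝ≥0, t ≤ T → ∀ x y : M,
        ∫ p, (dist p.1 p.2) ^ 2 ∂ (κ t) (x, y) ≤ ε (dist x y) := by
  intro T hT
  rcases isEmpty_or_nonempty M with hM | hM
  · exact ⟨fun _ => 0, tendsto_const_nhds, fun t ht x y => hM.elim x⟩
  obtain ⟨x₀⟩ := hM
  have hcd : Continuous fun p : M × M => (dist p.1 p.2) ^ 2 := by
    exact (continuous_dist.comp (continuous_fst.prodMk continuous_snd)).pow 2
  have hFc : Continuous fun q : ℝ≥0 × (M × M) =>
      ∫ p, (dist p.1 p.2) ^ 2 ∂ (κ q.1) q.2 := hcont _ hcd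
  set F : ℝ≥0 × (M × M) → ℝ := fun q => ∫ p, (dist p.1 p.2) ^ 2 ∂ (κ q.1) q.2 with hFdef
  -- a uniform bound
  obtain ⟨C, hC⟩ : ∃ C : ℝ, ∀ p : M × M, (dist p.1 p.2) ^ 2 ≤ C := by
    obtain ⟨p₀, -, hp⟩ := isCompact_univ.exists_isMaxOn ⟨(x₀, x₀), trivial⟩ hcd.continuousOn
    exact ⟨_, fun p => hp (Set.mem_univ p)⟩
  have hFle : ∀ q, F q ≤ C := by
    intro q
    haveI := hm q.1
    have hnorm : ∀ᵐ p ∂ (κ q.1) q.2, ‖(dist p.1 p.2) ^ 2‖ ≤ C := by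
      filter_upwards with p
      rw [Real.norm_eq_abs, abs_of_nonneg (sq_nonneg _)]
      exact hC p
    have := norm_integral_le_of_norm_le_const (μ := (κ q.1) q.2) hnorm
    simpa [Real.norm_eq_abs] using (le_abs_self _).trans this
  have hF0 : ∀ q, 0 ≤ F q := fun q => integral_nonneg fun p => sq_nonneg _
  have hFdiag : ∀ (t : ℝ≥0) (x : M), F (t, (x, x)) = 0 := by
    intro t x
    have h0 : (fun p : M × M => (dist p.1 p.2) ^ 2) =ᵐ[(κ t) (x, x)] fun _ => (0 : ℝ) := by
      filter_upwards [hdiag t x] with p hp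
      simp [hp]
    simp only [hFdef]
    rw [integral_congr_ae h0, integral_zero]
  -- key compactness estimate
  have key : ∀ δ : ℝ, 0 < δ → ∃ r₀ > (0 : ℝ), ∀ t : ℝ≥0, t ≤ T → ∀ x y : M,
      dist x y < r₀ → F (t, (x, y)) < δ := by
    intro δ hδ
    set K : Set (ℝ≥0 × (M × M)) :=
      (fun q : ℝ≥0 × M => (q.1, (q.2, q.2))) '' (Set.Icc 0 T ×ˢ Set.univ) with hKdef
    have hK : IsCompact K := ((isCompact_Icc).prod isCompact_univ).image (by continuity)
    have hU : IsOpen {q : ℝ≥0 × (M × M) | F q < δ} := isOpen_lt hFc continuous_const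
    have hKU : K ⊆ {q : ℝ≥0 × (M × M) | F q < δ} := by
      rintro _ ⟨⟨t, x⟩, -, rfl⟩
      simpa [hFdiag] using hδ
    obtain ⟨r₀, hr₀, hsub⟩ := hK.exists_thickening_subset_open hU hKU
    refine ⟨r₀, hr₀, fun t ht x y hxy => ?_⟩
    have hmem : (t, (x, y)) ∈ Metric.thickening r₀ K := by
      rw [Metric.mem_thickening_iff]
      refine ⟨(t, (x, x)), ⟨(t, x), ⟨⟨zero_le, ht⟩, trivial⟩, rfl⟩, ?_⟩
      have hd : dist ((t, (x, y)) : ℝ≥0 × (M × M)) (t, (x, x)) = dist x y := by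
        simp [Prod.dist_eq, dist_comm y x, dist_nonneg]
      rw [hd]; exact hxy
    exact hsub hmem
  -- the modulus
  set S : ℝ → Set ℝ := fun r =>
    {v | ∃ t : ℝ≥0, t ≤ T ∧ ∃ x y : M, dist x y ≤ r ∧ v = F (t, (x, y))} with hSdef
  have hbdd : ∀ r, BddAbove (S r) := by
    intro r
    refine ⟨C, ?_⟩
    rintro v ⟨t, ht, x, y, hxy, rfl⟩
    exact hFle _
  have hne : ∀ r : ℝ, 0 ≤ r → (S r).Nonempty := by
    intro r hr
    exact ⟨F (0, (x₀, x₀)), 0, zero_le, x₀, x₀, by simpa using hr, rfl⟩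
  have hε0 : ∀ r : ℝ, 0 ≤ r → 0 ≤ sSup (S r) := by
    intro r hr
    have hmem : F (0, (x₀, x₀)) ∈ S r := ⟨0, zero_le, x₀, x₀, by simpa using hr, rfl⟩
    exact (hF0 _).trans (le_csSup (hbdd r) hmem)
  refine ⟨fun r => sSup (S r), ?_, ?_⟩
  · rw [Metric.tendsto_nhdsWithin_nhds]
    intro δ hδ
    obtain ⟨r₀, hr₀, hkey⟩ := key (δ / 2) (half_pos hδ)
    refine ⟨r₀, hr₀, fun r hr hrd => ?_⟩
    have hr' : r < r₀ := by
      rw [Real.dist_eq, sub_zero, abs_of_nonneg hr] at hrd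
      exact hrd
    have hub : sSup (S r) ≤ δ / 2 := by
      apply csSup_le (hne r hr)
      rintro v ⟨t, ht, x, y, hxy, rfl⟩
      exact (hkey t ht x y (lt_of_le_of_lt hxy hr')).le
    rw [Real.dist_eq, sub_zero, abs_of_nonneg (hε0 r hr)]
    exact lt_of_le_of_lt hub (half_lt_self hδ)
  · intro t ht x y
    exact le_csSup (hbdd _) ⟨t, ht, x, y, le_refl _, rfl⟩
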